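/- Let X, Y be Hilbert spaces and A : X → Y a compact linear operator with ‖A‖ = 1. Under the source condition x† = A*z with ‖z‖ ≤ ρ, for α > 1 the Tikhonov reconstruction satisfies ‖T_α y^δ − x†‖ ≤ (δ + αρ)/(1 + α) whenever ‖y^δ − Ax†‖ ≤ δ. -/

import Mathlib

private lemma tikhonov_aux {s t W α : ℝ} (h1 : t ^ 2 + α * s ^ 2 ≤ W * t)
    (h2 : t ≤ s) (h3 : 0 ≤ t) (h4 : 0 ≤ W) (hα : 1 < α) :
    (1 + α) * s ≤ W := by
  have hp : (0:ℝ) ≤ (s - t) * (α * s - t) := by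
    apply mul_nonneg (by linarith)
    nlinarith
  have h6 : (1 + α) * s * t ≤ W * t := by nlinarith
  rcases eq_or_lt_of_le h3 with h | h
  · have hs : s = 0 := by nlinarith [sq_nonneg s]
    rw [hs]; simpa using h4
  · exact le_of_mul_le_mul_right h6 h

/-- Tikhonov error bound for `α > 1` under the source condition `x† = A*z`,
`‖z‖ ≤ ρ`, for a compact operator with `‖A‖ = 1`. -/
theorem tikhonov_error_large_alpha
    {X Y : Type*} [NormedAddCommGroup X] [InnerProductSpace ℝ X] [CompleteSpace X]
    [NormedAddCommGroup Y] [InnerProductSpace ℝ Y] [CompleteSpace Y]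
    (A : X →L[ℝ] Y) (hA : IsCompactOperator A) (hAnorm : ‖A‖ = 1)
    (z : Y) (ρ : ℝ) (hz : ‖z‖ ≤ ρ)
    (xdag : X) (hxdag : xdag = ContinuousLinearMap.adjoint A z)
    (δ : ℝ) (yδ : Y) (hnoise : ‖yδ - A xdag‖ ≤ δ)
    (α : ℝ) (hα : 1 < α)
    (xα : X)
    (hxα : ContinuousLinearMap.adjoint A (A xα) + α • xα
            = ContinuousLinearMap.adjoint A yδ) :
    ‖xα - xdag‖ ≤ (δ + α * ρ) / (1 + α) := by
  subst hxdag
  set B := ContinuousLinearMap.adjoint A with hB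
  set e : X := xα - B z with he
  set w : Y := (yδ - A (B z)) - α • z with hw
  have heq : B (A e) + α • e = B w := by
    simp only [he, hw, map_sub, map_smul]
    linear_combination (norm := module) hxα
  -- inner product with e
  have h3 : ‖A e‖ ^ 2 + α * ‖e‖ ^ 2 = inner ℝ w (A e) := by
    have h := congrArg (fun v => (inner ℝ v e : ℝ)) heq
    simpa [inner_add_left, real_inner_smul_left, hB,
      ContinuousLinearMap.adjoint_inner_left,
      real_inner_self_eq_norm_sq] using h
  have h4 : (inner ℝ w (A e) : ℝ) ≤ ‖w‖ * ‖A e‖ := real_inner_le_norm w (A e)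
  have h5 : ‖A e‖ ≤ ‖e‖ := by
    have := A.le_opNorm e
    rwa [hAnorm, one_mul] at this
  have hz0 : (0:ℝ) ≤ ρ := le_trans (norm_nonneg z) hz
  have hW : ‖w‖ ≤ δ + α * ρ := by
    calc ‖w‖ ≤ ‖yδ - A (B z)‖ + ‖α • z‖ := norm_sub_le _ _
    _ ≤ δ + α * ρ := by
        rw [norm_smul, Real.norm_eq_abs, abs_of_pos (by linarith)]
        have : α * ‖z‖ ≤ α * ρ := by nlinarith [norm_nonneg z]
        linarith
  have hAe0 : (0:ℝ) ≤ ‖A e‖ := norm_nonneg _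
  have he0 : (0:ℝ) ≤ ‖e‖ := norm_nonneg _
  have hW0 : (0:ℝ) ≤ ‖w‖ := norm_nonneg _
  rw [le_div_iff₀ (by linarith)]
  have key : (1 + α) * ‖e‖ ≤ ‖w‖ :=
    tikhonov_aux (h3.le.trans h4) h5 hAe0 hW0 hα
  linarith
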